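/- For n ≥ 0, let A_n = ⋃_{k ∈ ℕ} [2^{−n−1} + k·2^{1−n}, 3·2^{−n−1} + k·2^{1−n}). Then A = ⋂_{n ≥ 0} A_n intersected with [0,2] is exactly the two-point set {2/3, 4/3}. -/

import Mathlib

/-- `A n` is the set of directions for which the singular orbit `γₙ` of the exponential
step billiard directly crosses the aperture `G_{n+1}`. -/
noncomputable def Aset (n : ℕ) : Set ℝ :=
  ⋃ k : ℕ, Set.Ico ((2:ℝ) ^ (-(n : ℤ) - 1) + (k : ℝ) * 2 ^ (1 - (n : ℤ)))
                   (3 * (2:ℝ) ^ (-(n : ℤ) - 1) + (k : ℝ) * 2 ^ (1 - (n : ℤ)))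

lemma mem_Aset_iff (n : ℕ) (x : ℝ) :
    x ∈ Aset n ↔ ∃ k : ℕ, (4*k+1 : ℝ) ≤ x * 2^(n+1) ∧ x * 2^(n+1) < 4*k+3 := by
  have hc : (0:ℝ) < 2^(n+1) := by positivity
  have e1 : (2:ℝ)^(-(n:ℤ)-1) * 2^(n+1) = 1 := by
    have h : ((2:ℝ))^(n+1) = (2:ℝ)^(((n+1:ℕ)):ℤ) := (zpow_natCast 2 (n+1)).symm
    rw [h, ← zpow_add₀ (by norm_num : (2:ℝ) ≠ 0)]
    have h2 : (-(n:ℤ)-1) + ((n+1:ℕ):ℤ) = 0 := by push_cast; ring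
    rw [h2]; norm_num
  have e2 : (2:ℝ)^(1-(n:ℤ)) * 2^(n+1) = 4 := by
    have h : ((2:ℝ))^(n+1) = (2:ℝ)^(((n+1:ℕ)):ℤ) := (zpow_natCast 2 (n+1)).symm
    rw [h, ← zpow_add₀ (by norm_num : (2:ℝ) ≠ 0)]
    have h2 : (1-(n:ℤ)) + ((n+1:ℕ):ℤ) = 2 := by push_cast; ring
    rw [h2]; norm_num
  have expand : ∀ k : ℕ, ((2:ℝ)^(-(n:ℤ)-1) + (k:ℝ)*2^(1-(n:ℤ))) * 2^(n+1) = 4*k+1 := by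
    intro k; linear_combination e1 + (k:ℝ)*e2
  have expand3 : ∀ k : ℕ, (3*(2:ℝ)^(-(n:ℤ)-1) + (k:ℝ)*2^(1-(n:ℤ))) * 2^(n+1) = 4*k+3 := by
    intro k; linear_combination 3*e1 + (k:ℝ)*e2
  constructor
  · rintro hx
    simp only [Aset, Set.mem_iUnion, Set.mem_Ico] at hx
    obtain ⟨k, h1, h2⟩ := hx
    refine ⟨k, ?_, ?_⟩
    · have := mul_le_mul_of_nonneg_right h1 hc.le
      rw [expand k] at this; linarith
    · have := mul_lt_mul_of_pos_right h2 hc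
      rw [expand3 k] at this; linarith
  · rintro ⟨k, h1, h2⟩
    simp only [Aset, Set.mem_iUnion, Set.mem_Ico]
    refine ⟨k, ?_, ?_⟩
    · rw [← mul_le_mul_iff_left₀ hc, expand k]; linarith
    · rw [← mul_lt_mul_iff_left₀ hc, expand3 k]; linarith

lemma pow_mod3 (n : ℕ) : ∃ k : ℕ, (2:ℝ)^(n+2) = 12*k+4 ∨ (2:ℝ)^(n+2) = 12*k+8 := by
  induction n with
  | zero => exact ⟨0, Or.inl (by norm_num)⟩
  | succ n ih =>
    obtain ⟨k, h | h⟩ := ih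
    · refine ⟨2*k, Or.inr ?_⟩
      rw [show n+1+2 = (n+2)+1 from rfl, pow_succ, h]; push_cast; ring
    · refine ⟨2*k+1, Or.inl ?_⟩
      rw [show n+1+2 = (n+2)+1 from rfl, pow_succ, h]; push_cast; ring

lemma two_thirds_mem (n : ℕ) : (2/3 : ℝ) ∈ Aset n := by
  rw [mem_Aset_iff]
  have hp : (2:ℝ)^(n+2) = 2^(n+1) * 2 := pow_succ 2 (n+1)
  obtain ⟨k, h | h⟩ := pow_mod3 n
  · exact ⟨k, by constructor <;> nlinarith⟩
  · exact ⟨k, by constructor <;> nlinarith⟩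

lemma four_thirds_mem (n : ℕ) : (4/3 : ℝ) ∈ Aset n := by
  rw [mem_Aset_iff]
  have hp : (2:ℝ)^(n+3) = 2^(n+1) * 4 := by rw [show n+3 = (n+1)+2 from rfl, pow_add]; norm_num
  obtain ⟨k, h | h⟩ := pow_mod3 (n+1)
  · exact ⟨k, by constructor <;> nlinarith⟩
  · exact ⟨k, by constructor <;> nlinarith⟩

/-- The directions in `[0,2]` along which every `γₙ` crosses `G_{n+1}` are exactly
`2/3` and `4/3`. -/
theorem inter_Aset_eq_pair :
    (⋂ n : ℕ, Aset n) ∩ Set.Icc (0:ℝ) 2 = {2/3, 4/3} := by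
  ext x
  simp only [Set.mem_inter_iff, Set.mem_iInter, Set.mem_Icc, Set.mem_insert_iff,
    Set.mem_singleton_iff]
  constructor
  · rintro ⟨hA, hx0, hx2⟩
    have cond : ∀ n:ℕ, ∃ k:ℕ, (12*k+3:ℝ) ≤ 3*x*2^(n+1) ∧ 3*x*2^(n+1) < 12*k+9 := by
      intro n
      obtain ⟨k, h1, h2⟩ := (mem_Aset_iff n x).1 (hA n)
      exact ⟨k, by linarith, by linarith⟩
    have P : ∀ j:ℕ, ∀ n:ℕ, ∃ m:ℕ,
        |3*x*2^(n+1) - (12*m+4)| ≤ 2*(1/2:ℝ)^j ∨ |3*x*2^(n+1) - (12*m+8)| ≤ 2*(1/2:ℝ)^j := by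
      intro j
      induction j with
      | zero =>
        intro n
        obtain ⟨k, h1, h2⟩ := cond n
        by_cases h : 3*x*2^(n+1) < 12*k+6
        · exact ⟨k, Or.inl (by rw [abs_le]; norm_num; constructor <;> linarith)⟩
        · exact ⟨k, Or.inr (by rw [abs_le]; norm_num; constructor <;> linarith)⟩
      | succ j ih =>
        intro n
        obtain ⟨m, hm⟩ := ih (n+1)
        obtain ⟨k, hk1, hk2⟩ := cond n
        have hpow : (3:ℝ)*x*2^(n+1+1) = (3*x*2^(n+1))*2 := by
          rw [pow_succ]; ring
        set u := 3*x*2^(n+1) with hu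
        rw [hpow] at hm
        have hbj : ((1/2:ℝ))^j ≤ 1 := pow_le_one₀ (by norm_num) (by norm_num)
        have hb' : (2:ℝ)*(1/2)^(j+1) = (1/2)^j := by rw [pow_succ]; ring
        rcases hm with hm | hm
        · rw [abs_le] at hm
          rcases Nat.even_or_odd m with ⟨m', rfl⟩ | ⟨m', rfl⟩
          · -- target 12m'+2 ; forces k = m' and u = near 12m'+3
            have hu1 : u ≤ 12*(m':ℝ)+2 + (1/2)^j := by push_cast at hm ⊢; linarith
            have hu2 : 12*(m':ℝ)+2 - (1/2)^j ≤ u := by push_cast at hm ⊢; linarith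
            have hk_le : k ≤ m' := by
              have : (k:ℝ) ≤ m' := by linarith
              exact_mod_cast this
            have hk_ge : m' ≤ k := by
              have h3 : (m':ℝ) < (k:ℝ) + 1 := by linarith
              have : m' < k + 1 := by exact_mod_cast h3
              omega
            have hkm : k = m' := le_antisymm hk_le hk_ge
            subst hkm
            refine ⟨k, Or.inl ?_⟩
            rw [hb', abs_le]
            constructor <;> [skip; skip] <;> push_cast <;> linarith
          · -- m = 2m'+1 : target 12m'+8
            refine ⟨m', Or.inr ?_⟩
            rw [hb', abs_le]
            constructor <;> push_cast at hm ⊢ <;> linarith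
        · rw [abs_le] at hm
          rcases Nat.even_or_odd m with ⟨m', rfl⟩ | ⟨m', rfl⟩
          · refine ⟨m', Or.inl ?_⟩
            rw [hb', abs_le]
            constructor <;> push_cast at hm ⊢ <;> linarith
          · -- target 12m'+10 : contradiction
            exfalso
            have hu2 : 12*(m':ℝ)+10 - (1/2)^j ≤ u := by push_cast at hm ⊢; linarith
            have hk_ge : m' + 1 ≤ k := by
              have h3 : (m':ℝ) < (k:ℝ) := by linarith
              exact_mod_cast h3
            have : (12:ℝ)*(m'+1)+3 ≤ 12*k+3 := by
              have : ((m':ℝ)+1) ≤ k := by exact_mod_cast hk_ge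
              linarith
            push_cast at hm
            linarith
    have habs : ∀ j:ℕ, |6*x - 4| ≤ 2*(1/2:ℝ)^j ∨ |6*x - 8| ≤ 2*(1/2:ℝ)^j := by
      intro j
      obtain ⟨m, hm⟩ := P j 0
      have h6 : (3:ℝ)*x*2^(0+1) = 6*x := by norm_num; ring
      rw [h6] at hm
      have hbj : ((1/2:ℝ))^j ≤ 1 := pow_le_one₀ (by norm_num) (by norm_num)
      rcases hm with hm | hm <;> rw [abs_le] at hm
      · have hm0 : m = 0 := by
          by_contra hne
          have : (1:ℝ) ≤ m := by exact_mod_cast Nat.one_le_iff_ne_zero.2 hne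
          linarith
        subst hm0; left; rw [abs_le]; push_cast at hm ⊢; constructor <;> linarith
      · have hm0 : m = 0 := by
          by_contra hne
          have : (1:ℝ) ≤ m := by exact_mod_cast Nat.one_le_iff_ne_zero.2 hne
          linarith
        subst hm0; right; rw [abs_le]; push_cast at hm ⊢; constructor <;> linarith
    by_cases h1 : x = 2/3
    · exact Or.inl h1
    right
    by_contra h2
    have d1 : 0 < |6*x - 4| := by
      rw [abs_pos]; intro h; apply h1; linarith
    have d2 : 0 < |6*x - 8| := by
      rw [abs_pos]; intro h; apply h2; linarith
    set d := min |6*x-4| |6*x-8| with hd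
    have hdpos : 0 < d := lt_min d1 d2
    obtain ⟨j, hj⟩ := exists_pow_lt_of_lt_one (by linarith : (0:ℝ) < d/2) (by norm_num : (1/2:ℝ) < 1)
    rcases habs j with h | h
    · have := min_le_left |6*x-4| |6*x-8|; linarith
    · have := min_le_right |6*x-4| |6*x-8|; linarith
  · rintro (rfl | rfl)
    · exact ⟨fun n => two_thirds_mem n, by norm_num, by norm_num⟩
    · exact ⟨fun n => four_thirds_mem n, by norm_num, by norm_num⟩
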